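/- Let N ≥ 2 and let s ∈ ℝ^N satisfy ∑_{i=1}^N s(i) = 0. Then, with cyclic indices (N+1 ≡ 1), ∑_{i=1}^N (s(i) − s(i+1))² ≥ (1/N²)·∑_{i=1}^N s(i)². -/
import Mathlib


/-- Discrete Poincaré-type inequality on the ring: if `s` has zero sum,
then `∑ᵢ (s(i) - s(i+1))² ≥ (1/N²) ∑ᵢ s(i)²` (cyclic indices). -/
theorem ring_poincare_inequality
    (N : ℕ) [NeZero N] (hN : 2 ≤ N)
    (s : ZMod N → ℝ) (hsum : ∑ i : ZMod N, s i = 0) :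
    ∑ i : ZMod N, (s i - s (i + 1)) ^ 2 ≥
      (1 / (N : ℝ) ^ 2) * ∑ i : ZMod N, (s i) ^ 2 := by
  have hNpos : 0 < N := by omega
  have hNR : (0:ℝ) < (N:ℝ) := by exact_mod_cast hNpos
  set D := ∑ i : ZMod N, (s i - s (i + 1)) ^ 2 with hD
  have hDnn : 0 ≤ D := Finset.sum_nonneg fun i _ => sq_nonneg _
  -- telescoping
  have tel : ∀ (i : ZMod N) (m : ℕ),
      s i - s (i + (m : ZMod N)) = ∑ t ∈ Finset.range m, (s (i + t) - s (i + t + 1)) := by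
    intro i m
    induction m with
    | zero => simp
    | succ m ih =>
      rw [Finset.sum_range_succ, ← ih]
      have h1 : ((m + 1 : ℕ) : ZMod N) = (m : ZMod N) + 1 := by push_cast; ring
      rw [h1, ← add_assoc]
      ring
  -- partial sum of square diffs is at most D
  have sumsq_le : ∀ (i : ZMod N) (m : ℕ), m ≤ N →
      ∑ t ∈ Finset.range m, (s (i + t) - s (i + t + 1)) ^ 2 ≤ D := by
    intro i m hm
    have hinj : ∀ a ∈ Finset.range m, ∀ b ∈ Finset.range m,
        i + (a : ZMod N) = i + (b : ZMod N) → a = b := by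
      intro a ha b hb hab
      simp only [Finset.mem_range] at ha hb
      have h1 : (a : ZMod N) = (b : ZMod N) := by
        simpa using add_left_cancel hab
      have := congrArg ZMod.val h1
      rwa [ZMod.val_cast_of_lt (lt_of_lt_of_le ha hm),
        ZMod.val_cast_of_lt (lt_of_lt_of_le hb hm)] at this
    calc ∑ t ∈ Finset.range m, (s (i + t) - s (i + t + 1)) ^ 2
        = ∑ k ∈ (Finset.range m).image (fun t : ℕ => i + (t : ZMod N)),
            (s k - s (k + 1)) ^ 2 :=
          (Finset.sum_image (f := fun k : ZMod N => (s k - s (k + 1)) ^ 2) hinj).symm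
      _ ≤ D := Finset.sum_le_sum_of_subset_of_nonneg (Finset.subset_univ _)
          (fun k _ _ => sq_nonneg _)
  -- key pointwise bound
  have key : ∀ i j : ZMod N, (s i - s j) ^ 2 ≤ (N:ℝ) * D := by
    intro i j
    set m := (j - i).val with hm
    have hj : j = i + (m : ZMod N) := by
      rw [hm, ZMod.natCast_rightInverse (j - i)]; ring
    have hmN : m ≤ N := (ZMod.val_lt _).le
    calc (s i - s j) ^ 2
        = (∑ t ∈ Finset.range m, (s (i + t) - s (i + t + 1))) ^ 2 := by
          rw [← tel i m, ← hj]
      _ ≤ (Finset.range m).card * ∑ t ∈ Finset.range m, (s (i + t) - s (i + t + 1)) ^ 2 :=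
          sq_sum_le_card_mul_sum_sq
      _ ≤ (N:ℝ) * D := by
          rw [Finset.card_range]
          exact mul_le_mul (by exact_mod_cast hmN) (sumsq_le i m hmN)
            (Finset.sum_nonneg fun t _ => sq_nonneg _) hNR.le
  -- pointwise: s(i)^2 ≤ N * D
  have ptwise : ∀ i : ZMod N, (s i) ^ 2 ≤ (N:ℝ) * D := by
    intro i
    have hsumdiff : ∑ j : ZMod N, (s i - s j) = (N:ℝ) * s i := by
      rw [Finset.sum_sub_distrib, hsum, Finset.sum_const, Finset.card_univ, ZMod.card]
      simp [nsmul_eq_mul]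
    have h1 : ((N:ℝ) * s i) ^ 2 ≤ (N:ℝ) * ∑ j : ZMod N, (s i - s j) ^ 2 := by
      rw [← hsumdiff]
      have := sq_sum_le_card_mul_sum_sq (s := Finset.univ)
        (f := fun j : ZMod N => s i - s j)
      simpa [Finset.card_univ, ZMod.card] using this
    have h2 : ∑ j : ZMod N, (s i - s j) ^ 2 ≤ (N:ℝ) * ((N:ℝ) * D) := by
      calc ∑ j : ZMod N, (s i - s j) ^ 2 ≤ ∑ _j : ZMod N, (N:ℝ) * D :=
            Finset.sum_le_sum fun j _ => key i j
        _ = (N:ℝ) * ((N:ℝ) * D) := by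
            rw [Finset.sum_const, Finset.card_univ, ZMod.card]; simp [nsmul_eq_mul]
    have h3 : (N:ℝ)^2 * (s i)^2 ≤ (N:ℝ)^2 * ((N:ℝ) * D) := by
      calc (N:ℝ)^2 * (s i)^2 = ((N:ℝ) * s i)^2 := by ring
        _ ≤ (N:ℝ) * ∑ j : ZMod N, (s i - s j) ^ 2 := h1
        _ ≤ (N:ℝ) * ((N:ℝ) * ((N:ℝ) * D)) := by
            exact mul_le_mul_of_nonneg_left h2 hNR.le
        _ = (N:ℝ)^2 * ((N:ℝ) * D) := by ring
    exact le_of_mul_le_mul_left h3 (by positivity)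
  -- conclude
  have hfinal : ∑ i : ZMod N, (s i) ^ 2 ≤ (N:ℝ)^2 * D := by
    calc ∑ i : ZMod N, (s i) ^ 2 ≤ ∑ _i : ZMod N, (N:ℝ) * D :=
          Finset.sum_le_sum fun i _ => ptwise i
      _ = (N:ℝ) * ((N:ℝ) * D) := by
          rw [Finset.sum_const, Finset.card_univ, ZMod.card]; simp [nsmul_eq_mul]
      _ = (N:ℝ)^2 * D := by ring
  rw [ge_iff_le, one_div, inv_mul_le_iff₀ (by positivity)]
  linarith [hfinal]
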